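/- Let $\mathcal{L}$ be a holomorphic Lie algebroid over $X$, $Q$ a closed holomorphic 2-$\mathcal{L}$-form, and $\mathcal{E}$ a coherent $\mathcal{O}_X$-module. A $\Lambda_{\mathcal{L},[(0,Q)]}$-module structure on $\mathcal{E}$ is equivalent to a holomorphic $\mathcal{L}$-connection $\nabla$ on $\mathcal{E}$ whose curvature satisfies $F_\nabla = Q \cdot \mathrm{id}_{\mathcal{E}}$. Concretely: given a global splitting $\zeta$ of $0 \to \mathcal{O}_X \to \Lambda_{(1)} \to \mathcal{L} \to 0$ with associated form $Q$, a map $\mu_1: \Lambda_{(1)} \otimes \mathcal{E} \to \mathcal{E}$ defined from an $\mathcal{L}$-connection $\nabla$ by $\mu_1((f + \zeta(u)) \otimes e) = fe + \nabla_u e$ extends to a $\Lambda$-module structure on $\mathcal{E}$ if and only if $F_\nabla(u,v) = Q(u,v)\,\mathrm{id}_{\mathcal{E}}$ for all $u, v$. -/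
import Mathlib


structure LieAlgebroid (k R L : Type*) [CommRing k] [CommRing R] [Algebra k R]
    [LieRing L] [LieAlgebra k L] [Module R L] [IsScalarTower k R L] where
  anchor : L →ₗ[R] Derivation k R R
  anchor_bracket : ∀ u v : L, anchor ⁅u, v⁆ = ⁅anchor u, anchor v⁆
  leibniz : ∀ (u v : L) (f : R), ⁅u, f • v⁆ = f • ⁅u, v⁆ + anchor u f • v

structure LieAlgebroid.Connection {k R L : Type*} [CommRing k] [CommRing R] [Algebra k R]
    [LieRing L] [LieAlgebra k L] [Module R L] [IsScalarTower k R L]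
    (A : LieAlgebroid k R L) (E : Type*) [AddCommGroup E] [Module R E] where
  nabla : L → E → E
  add_left : ∀ u v e, nabla (u + v) e = nabla u e + nabla v e
  smul_left : ∀ (f : R) (u : L) e, nabla (f • u) e = f • nabla u e
  add_right : ∀ u e e', nabla u (e + e') = nabla u e + nabla u e'
  leibniz : ∀ (u : L) (f : R) e, nabla u (f • e) = f • nabla u e + A.anchor u f • e

def LieAlgebroid.Connection.curv {k R L : Type*} [CommRing k] [CommRing R] [Algebra k R]
    [LieRing L] [LieAlgebra k L] [Module R L] [IsScalarTower k R L]
    {A : LieAlgebroid k R L} {E : Type*} [AddCommGroup E] [Module R E]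
    (C : A.Connection E) (u v : L) (e : E) : E :=
  C.nabla u (C.nabla v e) - C.nabla v (C.nabla u e) - C.nabla ⁅u, v⁆ e

/-- Let `L` be a holomorphic Lie algebroid, `Q` a closed 2-`L`-form and
`E` a sheaf.  A `Λ_{L,[(0,Q)]}`-module structure on `E` is equivalent to a holomorphic
`L`-connection `∇` with `F_∇ = Q·id_E`: given the splitting `ζ` of
`0 → O_X → Λ₍₁₎ → L → 0` (so `Λ₍₁₎ = O_X ⊕ L` with bracket
`[f+u, g+v] = [u,v] + Q(u,v) + a(u)g - a(v)f`), the map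
`μ₁((f + ζu) ⊗ e) = f e + ∇_u e` extends to a `Λ`-module structure, i.e. satisfies
`μ₁(a ⊗ μ₁(b ⊗ e)) - μ₁(b ⊗ μ₁(a ⊗ e)) = μ₁([a,b] ⊗ e)` for all `a, b ∈ Λ₍₁₎`,
if and only if `F_∇(u,v) = Q(u,v)·id_E` for all `u, v`. -/
theorem lambda_module_iff_curvature_eq_Q {R L E : Type*} [CommRing R] [Algebra ℂ R]
    [LieRing L] [LieAlgebra ℂ L] [Module R L] [IsScalarTower ℂ R L]
    [AddCommGroup E] [Module R E]
    (A : LieAlgebroid ℂ R L)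
    (Q : L → L → R)
    (Qskew : ∀ u v, Q u v = -Q v u)
    (Qadd : ∀ u v w, Q (u + v) w = Q u w + Q v w)
    (Qsmul : ∀ (f : R) u v, Q (f • u) v = f * Q u v)
    (Qclosed : ∀ u v w : L,
      A.anchor u (Q v w) - A.anchor v (Q u w) + A.anchor w (Q u v)
        - Q ⁅u, v⁆ w + Q ⁅u, w⁆ v - Q ⁅v, w⁆ u = 0)
    (C : A.Connection E)
    -- the degree-one piece Λ₍₁₎ = O_X ⊕ L with the Q-twisted bracket
    (br : R × L → R × L → R × L)
    (hbr : ∀ p q : R × L,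
      br p q = (Q p.2 q.2 + A.anchor p.2 q.1 - A.anchor q.2 p.1, ⁅p.2, q.2⁆))
    -- μ₁((f + ζ u) ⊗ e) = f e + ∇_u e
    (μ₁ : R × L → E → E) (hμ₁ : ∀ (p : R × L) (e : E), μ₁ p e = p.1 • e + C.nabla p.2 e) :
    (∀ (a b : R × L) (e : E), μ₁ a (μ₁ b e) - μ₁ b (μ₁ a e) = μ₁ (br a b) e) ↔
      (∀ (u v : L) (e : E), C.curv u v e = Q u v • e) := by
  constructor
  · intro h u v e
    have hc := h (0, u) (0, v) e
    simp only [hμ₁, hbr, C.add_right, C.leibniz, zero_smul, map_zero, add_zero,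
      zero_add, sub_zero] at hc
    simp only [LieAlgebroid.Connection.curv]
    rw [hc]; abel
  · intro h a b e
    obtain ⟨f, u⟩ := a
    obtain ⟨g, v⟩ := b
    have hc := h u v e
    simp only [LieAlgebroid.Connection.curv] at hc
    have h1 : C.nabla u (C.nabla v e)
        = C.nabla v (C.nabla u e) + C.nabla ⁅u, v⁆ e + Q u v • e := by
      rw [← hc]; abel
    simp only [hμ₁, hbr, C.add_right, C.leibniz, h1]
    module
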